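/- Let C be a nonempty closed convex subset of a real Hilbert space H and T : C → C an L-Lipschitz pseudo-contractive mapping with L ≥ 1 and F(T) ≠ ∅. Let α ∈ (0, 1/(L+1)), τ ∈ (0,1], x ∈ C, y = (1−α)x + αTx. If u ∈ C satisfies τ‖α(y − Ty)‖² ≤ 2α⟨x − u, y − Ty⟩, then ‖x − Tx‖ ≤ (2/(τα[1−(L+1)α]))‖x − u‖. -/

import Mathlib

open RealInnerProductSpace

theorem lipschitz_pseudo_contraction_Cx_subset'
    {H : Type*} [NormedAddCommGroup H] [InnerProductSpace ℝ H] [CompleteSpace H]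
    (C : Set H) (hC : IsClosed C) (hCconv : Convex ℝ C) (hCne : C.Nonempty)
    (T : H → H) (hT : ∀ x ∈ C, T x ∈ C)
    (L : ℝ) (hL : 1 ≤ L)
    (hLip : ∀ x ∈ C, ∀ y ∈ C, ‖T x - T y‖ ≤ L * ‖x - y‖)
    (hpc : ∀ x ∈ C, ∀ y ∈ C, ⟪T x - T y, x - y⟫ ≤ ‖x - y‖ ^ 2)
    (hF : ∃ p ∈ C, T p = p)
    (α τ : ℝ) (hα0 : 0 < α) (hα1 : α < 1 / (L + 1)) (hτ0 : 0 < τ) (hτ1 : τ ≤ 1)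
    (x : H) (hx : x ∈ C) (y : H) (hy : y = (1 - α) • x + α • T x)
    (u : H) (hu : u ∈ C)
    (huC : τ * ‖α • (y - T y)‖ ^ 2 ≤ 2 * α * ⟪x - u, y - T y⟫) :
    ‖x - T x‖ ≤ (2 / (τ * α * (1 - (L + 1) * α))) * ‖x - u‖ := by
  have hL1 : (0:ℝ) < L + 1 := by linarith
  have hα12 : α < 1 := lt_of_lt_of_le hα1 (by
    rw [div_le_one hL1]; linarith)
  have hc : 0 < 1 - (L + 1) * α := by
    have := (lt_div_iff₀ hL1).mp hα1
    linarith [mul_comm α (L + 1)]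
  -- y ∈ C
  have hyC : y ∈ C := by
    rw [hy]
    exact hCconv hx (hT x hx) (by linarith) hα0.le (by ring)
  -- x - y = α • (x - T x)
  have hxy : x - y = α • (x - T x) := by
    rw [hy]; module
  have hxynorm : ‖x - y‖ = α * ‖x - T x‖ := by
    rw [hxy, norm_smul, Real.norm_of_nonneg hα0.le]
  -- key1 : (1-(L+1)α)‖x-Tx‖ ≤ ‖y-Ty‖
  have htri : ‖x - T x‖ ≤ ‖x - y‖ + ‖y - T y‖ + ‖T y - T x‖ := by
    have : x - T x = (x - y) + (y - T y) + (T y - T x) := by abel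
    rw [this]
    exact (norm_add_le _ _).trans (by gcongr; exact norm_add_le _ _)
  have hlip' : ‖T y - T x‖ ≤ L * (α * ‖x - T x‖) := by
    have := hLip y hyC x hx
    have hyx : ‖y - x‖ = α * ‖x - T x‖ := by rw [← norm_neg, neg_sub, hxynorm]
    rwa [hyx] at this
  have key1 : (1 - (L + 1) * α) * ‖x - T x‖ ≤ ‖y - T y‖ := by
    nlinarith [htri, hlip', hxynorm]
  -- key2 : τ * α * ‖y - Ty‖ ≤ 2 * ‖x - u‖
  have hcs : ⟪x - u, y - T y⟫ ≤ ‖x - u‖ * ‖y - T y‖ := real_inner_le_norm _ _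
  have huC' : τ * (α ^ 2 * ‖y - T y‖ ^ 2) ≤ 2 * α * (‖x - u‖ * ‖y - T y‖) := by
    calc τ * (α ^ 2 * ‖y - T y‖ ^ 2) = τ * ‖α • (y - T y)‖ ^ 2 := by
          rw [norm_smul, Real.norm_of_nonneg hα0.le]; ring
      _ ≤ 2 * α * ⟪x - u, y - T y⟫ := huC
      _ ≤ 2 * α * (‖x - u‖ * ‖y - T y‖) := by
          have := mul_le_mul_of_nonneg_left hcs (by positivity : (0:ℝ) ≤ 2 * α)
          linarith
  have key2 : τ * α * ‖y - T y‖ ≤ 2 * ‖x - u‖ := by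
    rcases eq_or_lt_of_le (norm_nonneg (y - T y)) with h0 | h0
    · rw [← h0, mul_zero]; positivity
    · have := (mul_le_mul_iff_of_pos_right h0).mp (by nlinarith : (τ * α * ‖y - T y‖) * ‖y - T y‖ ≤ (2 * ‖x - u‖) * ‖y - T y‖)
      exact this
  -- conclude
  have hpos : 0 < τ * α * (1 - (L + 1) * α) := by positivity
  rw [div_mul_eq_mul_div, le_div_iff₀ hpos]
  calc ‖x - T x‖ * (τ * α * (1 - (L + 1) * α))
      = τ * α * ((1 - (L + 1) * α) * ‖x - T x‖) := by ring
    _ ≤ τ * α * ‖y - T y‖ := by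
        have : 0 ≤ τ * α := by positivity
        exact mul_le_mul_of_nonneg_left key1 this
    _ ≤ 2 * ‖x - u‖ := key2
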